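/- Let D ⊂ ℝ^3 be the circular cone {(a_0,a_1,a_2) : 0 ≤ a_0, a_1²+a_2² ≤ a_0²}. If P, Q ∈ Mat_{n−1,n}(ℂ), and N_0 = P*P+Q*Q, N_1 = P*Q+Q*P, N_2 = i(Q*P−P*Q), then D = {a ∈ ℝ^3 : a_0N_0 + a_1N_1 + a_2N_2 ⪰ 0}, provided N_0 is positive definite. -/

import Mathlib

open ComplexOrder Matrix

lemma smulPSD {m : ℕ} {M : Matrix (Fin m) (Fin m) ℂ} (hM : M.PosSemidef) {r : ℝ} (hr : 0 ≤ r) :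
    ((r : ℂ) • M).PosSemidef := by
  refine posSemidef_iff_dotProduct_mulVec.mpr ⟨?_, ?_⟩
  · unfold Matrix.IsHermitian
    rw [conjTranspose_smul, hM.1.eq]
    simp
  · intro x
    rw [smul_mulVec, dotProduct_smul]
    exact mul_nonneg (by exact_mod_cast hr) (hM.dotProduct_mulVec_nonneg x)

lemma keyId {n : ℕ} (P Q : Matrix (Fin n) (Fin (n + 1)) ℂ) (u v : ℝ) (huv : u ^ 2 + v ^ 2 = 1) :
    ((((u : ℂ) + v * Complex.I) • P + Q)ᴴ * (((u : ℂ) + v * Complex.I) • P + Q))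
      = (Pᴴ * P + Qᴴ * Q) + (u : ℂ) • (Pᴴ * Q + Qᴴ * P)
        + (v : ℂ) • (Complex.I • (Qᴴ * P - Pᴴ * Q)) := by
  have huv' : (u : ℂ) ^ 2 + (v : ℂ) ^ 2 = 1 := by exact_mod_cast huv
  rw [conjTranspose_add, conjTranspose_smul, Matrix.add_mul, Matrix.mul_add, Matrix.mul_add,
    Matrix.smul_mul, Matrix.smul_mul]
  simp only [Matrix.mul_smul]
  have hs : star ((u : ℂ) + v * Complex.I) = (u : ℂ) - v * Complex.I := by
    simp [Complex.ext_iff]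
  rw [hs]
  match_scalars
  · linear_combination huv' - (v:ℂ)^2 * Complex.I_sq
  · ring
  · ring
  · ring

lemma kerVec {n : ℕ} (A : Matrix (Fin n) (Fin (n + 1)) ℂ) : ∃ x ≠ 0, A *ᵥ x = 0 := by
  have h : ¬ Function.Injective A.mulVecLin := by
    intro h
    have := LinearMap.finrank_le_finrank_of_injective h
    simp [Module.finrank_pi] at this
  rw [← LinearMap.ker_eq_bot] at h
  obtain ⟨x, hx, hx0⟩ := (Submodule.ne_bot_iff _).mp h
  exact ⟨x, hx0, hx⟩

theorem stmt4 (n : ℕ) (P Q : Matrix (Fin n) (Fin (n + 1)) ℂ)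
    (hpd : (Pᴴ * P + Qᴴ * Q).PosDef) :
    ∀ a₀ a₁ a₂ : ℝ,
      (0 ≤ a₀ ∧ a₁ ^ 2 + a₂ ^ 2 ≤ a₀ ^ 2) ↔
      ((a₀ : ℂ) • (Pᴴ * P + Qᴴ * Q) + (a₁ : ℂ) • (Pᴴ * Q + Qᴴ * P)
        + (a₂ : ℂ) • (Complex.I • (Qᴴ * P - Pᴴ * Q))).PosSemidef := by
  intro a₀ a₁ a₂
  set N₀ := Pᴴ * P + Qᴴ * Q with hN₀
  set N₁ := Pᴴ * Q + Qᴴ * P with hN₁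
  set N₂ := Complex.I • (Qᴴ * P - Pᴴ * Q) with hN₂
  set s := Real.sqrt (a₁ ^ 2 + a₂ ^ 2) with hsdef
  have hs0 : 0 ≤ s := Real.sqrt_nonneg _
  have hssq : s ^ 2 = a₁ ^ 2 + a₂ ^ 2 := Real.sq_sqrt (by positivity)
  -- unit vector
  obtain ⟨u, v, huv, hu, hv⟩ : ∃ u v : ℝ, u ^ 2 + v ^ 2 = 1 ∧ a₁ = s * u ∧ a₂ = s * v := by
    rcases eq_or_lt_of_le hs0 with h0 | hpos
    · refine ⟨1, 0, by norm_num, ?_, ?_⟩ <;>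
      · have : a₁ ^ 2 + a₂ ^ 2 = 0 := by
          rw [← hssq, ← h0]; ring
        have h1 : a₁ = 0 ∧ a₂ = 0 := by
          constructor <;> nlinarith [sq_nonneg a₁, sq_nonneg a₂]
        simp [h1.1, h1.2, ← h0]
    · refine ⟨a₁ / s, a₂ / s, ?_, by field_simp, by field_simp⟩
      field_simp
      linarith [hssq]
  have hkey := keyId P Q u v huv
  set A := (((u : ℂ) + v * Complex.I) • P + Q) with hA
  -- decomposition of the pencil
  have hdec : (a₀ : ℂ) • N₀ + (a₁ : ℂ) • N₁ + (a₂ : ℂ) • N₂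
      = ((a₀ - s : ℝ) : ℂ) • N₀ + ((s : ℝ) : ℂ) • (Aᴴ * A) := by
    rw [hkey, hu, hv]
    push_cast
    match_scalars <;> ring
  constructor
  · rintro ⟨h0, hle⟩
    have hsa : s ≤ a₀ := by
      nlinarith [hssq]
    rw [hdec]
    exact (smulPSD hpd.posSemidef (by linarith)).add
      (smulPSD (posSemidef_conjTranspose_mul_self A) hs0)
  · intro hpsd
    obtain ⟨x, hx0, hxker⟩ := kerVec A
    have hAx : (Aᴴ * A) *ᵥ x = 0 := by
      rw [← mulVec_mulVec, hxker, mulVec_zero]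
    have hq := hpd.dotProduct_mulVec_pos hx0
    have hval := hpsd.dotProduct_mulVec_nonneg x
    rw [hdec] at hval
    rw [add_mulVec, dotProduct_add, smul_mulVec, smul_mulVec, hAx,
      dotProduct_smul, dotProduct_smul, dotProduct_zero, smul_zero, add_zero,
      smul_eq_mul] at hval
    -- hval : 0 ≤ ((a₀ - s : ℝ) : ℂ) * (star x ⬝ᵥ N₀ *ᵥ x)
    set q : ℂ := star x ⬝ᵥ N₀ *ᵥ x with hqdef
    have hsa : s ≤ a₀ := by
      by_contra hc
      push_neg at hc
      have hneg : ((a₀ - s : ℝ) : ℂ) < 0 := by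
        rw [← Complex.ofReal_zero, Complex.real_lt_real]
        linarith
      have : ((a₀ - s : ℝ) : ℂ) * q < 0 := mul_neg_of_neg_of_pos hneg hq
      exact this.not_ge hval
    refine ⟨le_trans hs0 hsa, ?_⟩
    nlinarith [hssq]
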